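/- For n ≥ 2 and 0 ≤ r ≤ n, the number of pairs (D, σ), where D is a set of r non-overlapping dominoes on the cycle of 2n seats each covering a fixed woman's seat and an adjacent empty seat, and σ is a seating of the n men into the n empty seats such that for each domino in D the man seated in its empty seat is the partner of the woman in its other seat, equals (2n/(2n−r)) · C(2n−r, r) · (n−r)!. -/

import Mathlib

open Finset in
/-- Count of bijections with `r` prescribed values. -/
lemma count_prescribed {α β γ : Type*} [Fintype α] [Fintype β] [DecidableEq α] [DecidableEq β]
    (hcard : Fintype.card α = Fintype.card β) (D : Finset γ) (g : γ → α) (h : γ → β)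
    (hg : Set.InjOn g D) (hh : Set.InjOn h D) :
    Nat.card {σ : α ≃ β // ∀ i ∈ D, σ (g i) = h i} =
      (Fintype.card α - D.card).factorial := by
  classical
  set s : Set α := g '' ↑D with hs
  set t : Set β := h '' ↑D with ht
  let e₀ : s ≃ t := (Equiv.Set.imageOfInjOn g ↑D hg).symm.trans (Equiv.Set.imageOfInjOn h ↑D hh)
  have key : ∀ (i : γ) (hi : i ∈ D), ((e₀ ⟨g i, ⟨i, hi, rfl⟩⟩ : t) : β) = h i := by
    intro i hi
    have h1 : (Equiv.Set.imageOfInjOn g ↑D hg).symm ⟨g i, ⟨i, hi, rfl⟩⟩ = ⟨i, hi⟩ := by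
      rw [Equiv.symm_apply_eq]; rfl
    simp only [e₀, Equiv.trans_apply, h1]
    rfl
  have e1 : {σ : α ≃ β // ∀ i ∈ D, σ (g i) = h i} ≃ {σ : α ≃ β // ∀ x : s, σ x = e₀ x} := by
    apply Equiv.subtypeEquivRight
    intro σ
    constructor
    · rintro H ⟨x, i, hi, rfl⟩
      rw [H i hi, ← key i hi]
    · intro H i hi
      rw [H ⟨g i, ⟨i, hi, rfl⟩⟩, key i hi]
  have e2 := Equiv.Set.compl e₀
  have hsc : Nat.card ↥(sᶜ) = Fintype.card α - D.card := by
    have h1 : Nat.card s = D.card := by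
      rw [Nat.card_coe_set_eq, hs, Set.ncard_image_of_injOn hg, Set.ncard_coe_finset]
    rw [Nat.card_eq_fintype_card, Fintype.card_compl_set, ← h1, Nat.card_eq_fintype_card]
  have htc : Nat.card ↥(tᶜ) = Fintype.card α - D.card := by
    have h1 : Nat.card t = D.card := by
      rw [Nat.card_coe_set_eq, ht, Set.ncard_image_of_injOn hh, Set.ncard_coe_finset]
    rw [Nat.card_eq_fintype_card, Fintype.card_compl_set, ← h1, Nat.card_eq_fintype_card, hcard]
  rw [Nat.card_congr (e1.trans e2)]
  have : Nonempty (↥(sᶜ) ≃ ↥(tᶜ)) := by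
    apply Fintype.card_eq.mp
    rw [← Nat.card_eq_fintype_card, ← Nat.card_eq_fintype_card, hsc, htc]
  obtain ⟨e⟩ := this
  rw [Nat.card_eq_fintype_card, Fintype.card_equiv e, ← Nat.card_eq_fintype_card, hsc]

section ZModHelpers
variable {m : ℕ} [NeZero m]

lemma zmod_succ_eq (x : ZMod m) : x + 1 = ((x.val + 1 : ℕ) : ZMod m) := by
  push_cast
  rw [ZMod.natCast_rightInverse x]

lemma zmod_succ_val (x : ZMod m) (h : x.val + 1 < m) : (x + 1).val = x.val + 1 := by
  rw [zmod_succ_eq, ZMod.val_cast_of_lt h]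

lemma zmod_succ_top (x : ZMod m) (h : x.val + 1 = m) : x + 1 = 0 := by
  rw [zmod_succ_eq, h, ZMod.natCast_self]

end ZModHelpers

section Maps

/-- Women sit at the even seats of the `2n`-cycle, woman `w` at seat `2w`.  A domino is
encoded by its starting seat `i`, covering the adjacent seats `i` and `i+1` (thus one even
seat, holding a woman, and one odd, empty, seat).  `DominoForced n D σ` says that for every
domino in `D`, the man seated (by `σ`) in its odd seat is the partner of the woman seated in
its even seat (man `w`'s partner is woman `w`). -/
def DominoForced (n : ℕ) (D : Finset (ZMod (2 * n)))
    (σ : ZMod n ≃ {s : ZMod (2 * n) // Odd s.val}) : Prop :=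
  ∀ i ∈ D,
    if Even i.val then
      ((σ ((i.val / 2 : ℕ) : ZMod n) : {s : ZMod (2 * n) // Odd s.val}) : ZMod (2 * n)) = i + 1
    else
      ((σ (((i + 1 : ZMod (2 * n)).val / 2 : ℕ) : ZMod n) :
        {s : ZMod (2 * n) // Odd s.val}) : ZMod (2 * n)) = i

variable (n : ℕ) [NeZero n]

instance : NeZero (2 * n) := ⟨by have := NeZero.pos n; omega⟩

/-- The woman covered by domino `i`. -/
def womanOf (i : ZMod (2 * n)) : ZMod n :=
  if Even i.val then ((i.val / 2 : ℕ) : ZMod n)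
  else (((i + 1 : ZMod (2 * n)).val / 2 : ℕ) : ZMod n)

lemma even_val_succ_lt (i : ZMod (2 * n)) (he : Even i.val) : i.val + 1 < 2 * n := by
  have h1 : i.val < 2 * n := ZMod.val_lt i
  have h2 : i.val % 2 = 0 := Nat.even_iff.mp he
  have := NeZero.pos n
  omega

/-- The odd seat of domino `i`. -/
def seatOf (i : ZMod (2 * n)) : {s : ZMod (2 * n) // Odd s.val} :=
  if he : Even i.val then
    ⟨i + 1, by
      rw [zmod_succ_val i (even_val_succ_lt n i he)]
      exact Even.add_one he⟩
  else ⟨i, Nat.odd_iff.mpr (by have := Nat.even_iff.not.mp he; omega)⟩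

variable {n}

lemma dominoForced_iff (D : Finset (ZMod (2 * n)))
    (σ : ZMod n ≃ {s : ZMod (2 * n) // Odd s.val}) :
    DominoForced n D σ ↔ ∀ i ∈ D, σ (womanOf n i) = seatOf n i := by
  unfold DominoForced womanOf seatOf
  apply forall₂_congr
  intro i _
  by_cases he : Even i.val
  · rw [if_pos he, if_pos he, dif_pos he, Subtype.ext_iff]
  · rw [if_neg he, if_neg he, dif_neg he, Subtype.ext_iff]

lemma womanOf_val (z : ZMod (2 * n)) : (womanOf n z).val =
    if Even z.val then z.val / 2
    else (if z.val + 1 = 2 * n then 0 else (z.val + 1) / 2) := by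
  have hvz : z.val < 2 * n := ZMod.val_lt z
  have hn := NeZero.pos n
  unfold womanOf
  by_cases hez : Even z.val
  · rw [if_pos hez, if_pos hez, ZMod.val_cast_of_lt (by omega)]
  · rw [if_neg hez, if_neg hez]
    have hoz := Nat.even_iff.not.mp hez
    rcases Nat.lt_or_ge (z.val + 1) (2 * n) with hlt | hge
    · rw [if_neg (by omega), zmod_succ_val z hlt, ZMod.val_cast_of_lt (by omega)]
    · have htop : z.val + 1 = 2 * n := by omega
      rw [if_pos htop, zmod_succ_top z htop, ZMod.val_zero, Nat.zero_div, Nat.cast_zero, ZMod.val_zero]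

lemma injOn_womanOf (D : Finset (ZMod (2 * n))) (hnc : ∀ i ∈ D, i + 1 ∉ D) :
    Set.InjOn (womanOf n) D := by
  have hinj2 := ZMod.val_injective (2 * n)
  have hn := NeZero.pos n
  intro x hx y hy hxy
  have hvx : x.val < 2 * n := ZMod.val_lt x
  have hvy : y.val < 2 * n := ZMod.val_lt y
  have heq : (womanOf n x).val = (womanOf n y).val := by rw [hxy]
  rw [womanOf_val x, womanOf_val y] at heq
  -- helper for the mixed case
  have mixed : ∀ u v : ZMod (2 * n), u ∈ D → v ∈ D → Even u.val → ¬Even v.val →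
      (u.val / 2 = if v.val + 1 = 2 * n then 0 else (v.val + 1) / 2) → False := by
    intro u v hu hv heu hev hequv
    have hvu : u.val < 2 * n := ZMod.val_lt u
    have hvv : v.val < 2 * n := ZMod.val_lt v
    have h1 := Nat.even_iff.mp heu
    have h2 := Nat.even_iff.not.mp hev
    rcases Nat.lt_or_ge (v.val + 1) (2 * n) with hlt | hge
    · rw [if_neg (by omega)] at hequv
      have huv : u.val = v.val + 1 := by omega
      have : v + 1 = u := hinj2 (by rw [zmod_succ_val v hlt, ← huv])
      exact hnc v hv (this ▸ hu)
    · have htop : v.val + 1 = 2 * n := by omega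
      rw [if_pos htop] at hequv
      have hu0 : u.val = 0 := by omega
      have hu' : u = 0 := by
        apply hinj2; rw [hu0, ZMod.val_zero]
      have h3 : v + 1 = u := by rw [zmod_succ_top v htop, hu']
      exact hnc v hv (h3 ▸ hu)
  by_cases hex : Even x.val <;> by_cases hey : Even y.val
  · rw [if_pos hex, if_pos hey] at heq
    have h1 := Nat.even_iff.mp hex
    have h2 := Nat.even_iff.mp hey
    exact hinj2 (by omega)
  · rw [if_pos hex, if_neg hey] at heq
    exact (mixed x y hx hy hex hey heq).elim
  · rw [if_neg hex, if_pos hey] at heq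
    exact (mixed y x hy hx hey hex heq.symm).elim
  · rw [if_neg hex, if_neg hey] at heq
    have h1 := Nat.even_iff.not.mp hex
    have h2 := Nat.even_iff.not.mp hey
    rcases Nat.lt_or_ge (x.val + 1) (2 * n) with hltx | hgex <;>
      rcases Nat.lt_or_ge (y.val + 1) (2 * n) with hlty | hgey
    · rw [if_neg (by omega), if_neg (by omega)] at heq
      exact hinj2 (by omega)
    · rw [if_neg (by omega), if_pos (by omega)] at heq
      omega
    · rw [if_pos (by omega), if_neg (by omega)] at heq
      omega
    · exact hinj2 (by omega)

lemma seatOf_coe (z : ZMod (2 * n)) :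
    ((seatOf n z : {s : ZMod (2 * n) // Odd s.val}) : ZMod (2 * n))
      = if Even z.val then z + 1 else z := by
  unfold seatOf
  by_cases hez : Even z.val
  · rw [dif_pos hez, if_pos hez]
  · rw [dif_neg hez, if_neg hez]

lemma injOn_seatOf (D : Finset (ZMod (2 * n))) (hnc : ∀ i ∈ D, i + 1 ∉ D) :
    Set.InjOn (seatOf n) D := by
  intro x hx y hy hxy
  have heq : ((seatOf n x : {s : ZMod (2 * n) // Odd s.val}) : ZMod (2 * n))
      = ((seatOf n y : {s : ZMod (2 * n) // Odd s.val}) : ZMod (2 * n)) := by rw [hxy]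
  rw [seatOf_coe x, seatOf_coe y] at heq
  by_cases hex : Even x.val <;> by_cases hey : Even y.val
  · rw [if_pos hex, if_pos hey] at heq
    exact add_right_cancel heq
  · rw [if_pos hex, if_neg hey] at heq
    exact absurd (heq ▸ hy) (hnc x hx)
  · rw [if_neg hex, if_pos hey] at heq
    exact absurd (heq ▸ hx) (hnc y hy)
  · rw [if_neg hex, if_neg hey] at heq
    exact heq

lemma card_odd_seats : Fintype.card {s : ZMod (2 * n) // Odd s.val} = n := by
  classical
  have hn := NeZero.pos n
  rw [Fintype.card_subtype]
  have h1 : (Finset.univ.filter (fun s : ZMod (2 * n) => Odd s.val)).card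
      = ((Finset.range (2 * n)).filter (fun a => Odd a)).card := by
    apply Finset.card_nbij (fun s => s.val)
    · intro s hs
      simp only [Finset.mem_coe, Finset.mem_filter, Finset.mem_univ, true_and, Finset.mem_range] at hs ⊢
      exact ⟨ZMod.val_lt s, hs⟩
    · intro a _ b _ hab
      exact ZMod.val_injective (2 * n) hab
    · intro a ha
      simp only [Finset.coe_filter, Finset.mem_range, Set.mem_image, Set.mem_setOf_eq,
        Finset.mem_univ, true_and, Finset.mem_coe, Finset.mem_filter] at ha ⊢
      exact ⟨((a : ℕ) : ZMod (2 * n)), by rw [ZMod.val_cast_of_lt ha.1]; exact ha.2,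
        ZMod.val_cast_of_lt ha.1⟩
  rw [h1]
  have h2 : (Finset.range (2 * n)).filter (fun a => Odd a)
      = (Finset.range n).image (fun k => 2 * k + 1) := by
    ext a
    simp only [Finset.mem_filter, Finset.mem_range, Finset.mem_image, Nat.odd_iff]
    constructor
    · rintro ⟨hlt, hodd⟩
      exact ⟨a / 2, by omega, by omega⟩
    · rintro ⟨k, hk, rfl⟩
      omega
  rw [h2, Finset.card_image_of_injective _ (fun a b hab => by omega), Finset.card_range]

lemma fiber_count (r : ℕ) (D : Finset (ZMod (2 * n)))
    (hcard : D.card = r) (hnc : ∀ i ∈ D, i + 1 ∉ D) :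
    Nat.card {σ : ZMod n ≃ {s : ZMod (2 * n) // Odd s.val} // DominoForced n D σ}
      = (n - r).factorial := by
  classical
  rw [Nat.card_congr (Equiv.subtypeEquivRight (fun σ => dominoForced_iff D σ))]
  have h := count_prescribed (γ := ZMod (2 * n))
    (by rw [ZMod.card, card_odd_seats] : Fintype.card (ZMod n)
        = Fintype.card {s : ZMod (2 * n) // Odd s.val})
    D (womanOf n) (seatOf n) (injOn_womanOf D hnc) (injOn_seatOf D hnc)
  rw [h, ZMod.card, hcard]

end Maps


/-- Number of `r`-subsets of `range k` with no two consecutive elements. -/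
def lineCount (k r : ℕ) : ℕ :=
  (((Finset.range k).powersetCard r).filter (fun S => ∀ i ∈ S, i + 1 ∉ S)).card

lemma lineCount_zero (k : ℕ) : lineCount k 0 = 1 := by
  unfold lineCount
  rw [Finset.powersetCard_zero, Finset.filter_singleton, if_pos (by simp), Finset.card_singleton]

lemma lineCount_zero_left (r : ℕ) : lineCount 0 (r + 1) = 0 := by
  unfold lineCount
  rw [Finset.card_eq_zero, Finset.filter_eq_empty_iff]
  intro S hS
  simp only [Finset.mem_powersetCard, Finset.range_zero, Finset.subset_empty] at hS
  obtain ⟨h1, h2⟩ := hS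
  subst h1; simp at h2

lemma lineCount_one (r : ℕ) : lineCount 1 (r + 1) = if r = 0 then 1 else 0 := by
  unfold lineCount
  rcases r with _ | r
  · rw [if_pos rfl, Finset.card_eq_one]
    refine ⟨{0}, ?_⟩
    ext S
    simp only [Finset.mem_filter, Finset.mem_powersetCard, Finset.mem_singleton]
    constructor
    · rintro ⟨⟨hsub, hcard⟩, _⟩
      rw [Finset.card_eq_one] at hcard
      obtain ⟨a, rfl⟩ := hcard
      have := hsub (Finset.mem_singleton_self a)
      simp only [Finset.range_one, Finset.mem_singleton] at this
      rw [this]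
    · rintro rfl
      refine ⟨⟨by simp, by simp⟩, ?_⟩
      intro i hi
      simp only [Finset.mem_singleton] at hi ⊢
      omega
  · rw [if_neg (by omega)]
    rw [Finset.card_eq_zero, Finset.filter_eq_empty_iff]
    intro S hS
    simp only [Finset.mem_powersetCard] at hS
    obtain ⟨hsub, hcard⟩ := hS
    have := Finset.card_le_card hsub
    simp at this; omega

lemma lineCount_succ_succ (k r : ℕ) :
    lineCount (k + 2) (r + 1) = lineCount (k + 1) (r + 1) + lineCount k r := by
  classical
  unfold lineCount
  rw [← Finset.card_filter_add_card_filter_not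
      (s := ((Finset.range (k+2)).powersetCard (r+1)).filter (fun S => ∀ i ∈ S, i + 1 ∉ S))
      (p := fun S => (k + 1) ∉ S)]
  congr 1
  · -- k+1 ∉ S
    rw [Finset.filter_filter]
    congr 1
    ext S
    simp only [Finset.mem_filter, Finset.mem_powersetCard]
    constructor
    · rintro ⟨⟨hsub, hcard⟩, hnc, hk⟩
      refine ⟨⟨fun x hx => ?_, hcard⟩, hnc⟩
      have := Finset.mem_range.mp (hsub hx)
      have hxk : x ≠ k + 1 := fun h => hk (h ▸ hx)
      simp only [Finset.mem_range]; omega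
    · rintro ⟨⟨hsub, hcard⟩, hnc⟩
      have hk : (k+1) ∉ S := fun h => by have := Finset.mem_range.mp (hsub h); omega
      refine ⟨⟨fun x hx => ?_, hcard⟩, hnc, hk⟩
      have := Finset.mem_range.mp (hsub hx)
      simp only [Finset.mem_range]; omega
  · -- k+1 ∈ S
    rw [Finset.filter_filter]
    apply Finset.card_nbij' (fun S => S.erase (k+1)) (fun T => insert (k+1) T)
    · intro S hS
      simp only [Finset.mem_coe, Finset.mem_filter, Finset.mem_powersetCard, not_not] at hS ⊢
      obtain ⟨⟨hsub, hcard⟩, hnc, hk⟩ := hS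
      refine ⟨⟨fun x hx => ?_, ?_⟩, ?_⟩
      · have hx1 := Finset.mem_of_mem_erase hx
        have hx2 := Finset.ne_of_mem_erase hx
        have := Finset.mem_range.mp (hsub hx1)
        have hxk : x ≠ k := fun h => hnc x hx1 (by rw [h]; exact hk)
        simp only [Finset.mem_range]; omega
      · rw [Finset.card_erase_of_mem hk, hcard]; rfl
      · intro i hi h
        exact hnc i (Finset.mem_of_mem_erase hi) (Finset.mem_of_mem_erase h)
    · intro T hT
      simp only [Finset.mem_coe, Finset.mem_filter, Finset.mem_powersetCard, not_not] at hT ⊢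
      obtain ⟨⟨hsub, hcard⟩, hnc⟩ := hT
      have hkT : (k+1) ∉ T := fun h => by have := Finset.mem_range.mp (hsub h); omega
      refine ⟨⟨fun x hx => ?_, ?_⟩, ?_, Finset.mem_insert_self _ _⟩
      · rcases Finset.mem_insert.mp hx with h | h
        · simp only [Finset.mem_range]; omega
        · have := Finset.mem_range.mp (hsub h); simp only [Finset.mem_range]; omega
      · rw [Finset.card_insert_of_notMem hkT, hcard]
      · intro i hi hcon
        rcases Finset.mem_insert.mp hi with h | h
        · subst h
          rcases Finset.mem_insert.mp hcon with h2 | h2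
          · omega
          · have := Finset.mem_range.mp (hsub h2); omega
        · rcases Finset.mem_insert.mp hcon with h2 | h2
          · have := Finset.mem_range.mp (hsub h); omega
          · exact hnc i h h2
    · intro S hS
      simp only [Finset.mem_coe, Finset.mem_filter, not_not] at hS
      exact Finset.insert_erase hS.2.2
    · intro T hT
      simp only [Finset.mem_coe, Finset.mem_filter, Finset.mem_powersetCard] at hT
      have hkT : (k+1) ∉ T := fun h => by have := Finset.mem_range.mp (hT.1.1 h); omega
      exact Finset.erase_insert hkT

lemma lineCount_eq (k r : ℕ) : lineCount k r = (k + 1 - r).choose r := by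
  induction k using Nat.strong_induction_on generalizing r with
  | _ k ih =>
    match k, r with
    | 0, 0 => rw [lineCount_zero]; simp
    | 0, r+1 => rw [lineCount_zero_left]; rcases r with _ | r <;> simp
    | 1, 0 => rw [lineCount_zero]; simp
    | 1, r+1 =>
      rw [lineCount_one]
      rcases r with _ | r
      · simp
      · rw [if_neg (by omega)]
        rw [show (1 + 1 - (r + 2) : ℕ) = 0 by omega, Nat.choose_eq_zero_of_lt (by omega)]
    | k+2, 0 => rw [lineCount_zero]; simp
    | k+2, r+1 =>
      rw [lineCount_succ_succ, ih (k+1) (by omega), ih k (by omega)]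
      rcases le_or_gt (r+1) (k+2) with h | h
      · rw [show (k + 2 + 1 - (r+1) : ℕ) = (k + 1 - r) + 1 by omega,
            show (k + 1 + 1 - (r + 1) : ℕ) = k + 1 - r by omega]
        rw [Nat.choose_succ_succ (k+1-r) r]
        simp only [Nat.succ_eq_add_one]; omega
      · rw [Nat.choose_eq_zero_of_lt (by omega), Nat.choose_eq_zero_of_lt (by omega),
            Nat.choose_eq_zero_of_lt (by omega)]

lemma cycle_part_A (m r : ℕ) [NeZero m] (hm : 4 ≤ m) :
    ((Finset.univ : Finset (Finset (ZMod m))).filter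
        (fun D => (D.card = r ∧ ∀ i ∈ D, i + 1 ∉ D) ∧ 0 ∉ D)).card = lineCount (m - 1) r := by
  classical
  unfold lineCount
  have hvlt : ∀ x : ZMod m, x.val < m := ZMod.val_lt
  have hinj := ZMod.val_injective m
  apply Finset.card_nbij' (fun D => D.image (fun x => x.val - 1))
    (fun T => T.image (fun a => ((a + 1 : ℕ) : ZMod m)))
  · -- forward into target
    intro D hD
    simp only [Finset.mem_coe, Finset.mem_filter, Finset.mem_univ, true_and] at hD
    obtain ⟨⟨hcard, hnc⟩, h0⟩ := hD
    have hmem : ∀ x ∈ D, 1 ≤ x.val := by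
      intro x hx
      rcases Nat.eq_zero_or_pos x.val with h | h
      · exact absurd (((ZMod.val_eq_zero x).mp h) ▸ hx) h0
      · exact h
    simp only [Finset.mem_coe, Finset.mem_powersetCard, Finset.mem_filter]
    refine ⟨⟨?_, ?_⟩, ?_⟩
    · intro a ha
      simp only [Finset.mem_image] at ha
      obtain ⟨x, hx, rfl⟩ := ha
      have := hvlt x
      simp only [Finset.mem_range]
      omega
    · rw [Finset.card_image_of_injOn, hcard]
      intro x hx y hy hxy
      have hxy' : x.val - 1 = y.val - 1 := hxy
      have := hmem x hx; have := hmem y hy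
      exact hinj (by omega)
    · intro a ha hcon
      simp only [Finset.mem_image] at ha hcon
      obtain ⟨x, hx, hxa⟩ := ha
      obtain ⟨y, hy, hya⟩ := hcon
      have h1 := hmem x hx; have h2 := hmem y hy
      have h3 := hvlt x; have h4 := hvlt y
      have hyx : y.val = x.val + 1 := by omega
      have : y = x + 1 := hinj (by rw [zmod_succ_val x (by omega), hyx])
      exact hnc x hx (this ▸ hy)
  · -- backward into source
    intro T hT
    simp only [Finset.mem_coe, Finset.mem_powersetCard, Finset.mem_filter] at hT
    obtain ⟨⟨hsub, hcard⟩, hnc⟩ := hT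
    have hb : ∀ a ∈ T, a + 1 < m := by
      intro a ha
      have := Finset.mem_range.mp (hsub ha)
      omega
    simp only [Finset.mem_coe, Finset.mem_filter, Finset.mem_univ, true_and]
    refine ⟨⟨?_, ?_⟩, ?_⟩
    · rw [Finset.card_image_of_injOn, hcard]
      intro a ha b hb' hab
      have hab' : ((a + 1 : ℕ) : ZMod m) = ((b + 1 : ℕ) : ZMod m) := hab
      have := hb a ha; have := hb b hb'
      have : ((a + 1 : ℕ) : ZMod m).val = ((b + 1 : ℕ) : ZMod m).val := by rw [hab']
      rw [ZMod.val_cast_of_lt, ZMod.val_cast_of_lt] at this <;> omega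
    · intro i hi hcon
      simp only [Finset.mem_image] at hi hcon
      obtain ⟨a, ha, rfl⟩ := hi
      obtain ⟨b, hb', hba⟩ := hcon
      have hva : ((a + 1 : ℕ) : ZMod m).val = a + 1 := ZMod.val_cast_of_lt (hb a ha)
      have hvb : ((b + 1 : ℕ) : ZMod m).val = b + 1 := ZMod.val_cast_of_lt (hb b hb')
      rcases Nat.lt_or_ge (a + 2) m with h | h
      · have : ((b + 1 : ℕ) : ZMod m).val = a + 2 := by
          rw [hba, zmod_succ_val _ (by rw [hva]; omega), hva]
        rw [hvb] at this
        have : b = a + 1 := by omega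
        exact hnc a ha (this ▸ hb')
      · have ha2 : a + 2 = m := by have := hb a ha; omega
        have : ((a + 1 : ℕ) : ZMod m) + 1 = 0 := zmod_succ_top _ (by rw [hva]; omega)
        rw [this] at hba
        have : b + 1 = 0 := by rw [← hvb, hba, ZMod.val_zero]
        omega
    · intro hcon
      simp only [Finset.mem_image] at hcon
      obtain ⟨a, ha, haa⟩ := hcon
      have : ((a + 1 : ℕ) : ZMod m).val = a + 1 := ZMod.val_cast_of_lt (hb a ha)
      rw [haa, ZMod.val_zero] at this
      omega
  · -- left inverse
    intro D hD
    simp only [Finset.mem_coe, Finset.mem_filter, Finset.mem_univ, true_and] at hD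
    obtain ⟨⟨hcard, hnc⟩, h0⟩ := hD
    beta_reduce
    rw [Finset.image_image]
    rw [show D.image ((fun a => ((a + 1 : ℕ) : ZMod m)) ∘ fun x => x.val - 1) = D.image id from ?_,
       Finset.image_id]
    apply Finset.image_congr
    intro x hx
    have h1 : 1 ≤ x.val := by
      rcases Nat.eq_zero_or_pos x.val with h | h
      · exact absurd (((ZMod.val_eq_zero x).mp h) ▸ hx) h0
      · exact h
    simp only [Function.comp_apply, id_eq]
    rw [show x.val - 1 + 1 = x.val by omega]
    exact ZMod.natCast_rightInverse x
  · -- right inverse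
    intro T hT
    simp only [Finset.mem_coe, Finset.mem_powersetCard, Finset.mem_filter] at hT
    obtain ⟨⟨hsub, hcard⟩, hnc⟩ := hT
    beta_reduce
    rw [Finset.image_image]
    rw [show T.image ((fun x : ZMod m => x.val - 1) ∘ fun a => ((a + 1 : ℕ) : ZMod m))
        = T.image id from ?_, Finset.image_id]
    apply Finset.image_congr
    intro a ha
    have := Finset.mem_range.mp (hsub ha)
    simp only [Function.comp_apply, id_eq]
    rw [ZMod.val_cast_of_lt (by omega)]
    omega

lemma cycle_part_B (m r : ℕ) [NeZero m] (hm : 4 ≤ m) :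
    ((Finset.univ : Finset (Finset (ZMod m))).filter
        (fun D => (D.card = r + 1 ∧ ∀ i ∈ D, i + 1 ∉ D) ∧ 0 ∈ D)).card
      = lineCount (m - 3) r := by
  classical
  unfold lineCount
  have hvlt : ∀ x : ZMod m, x.val < m := ZMod.val_lt
  have hinj := ZMod.val_injective m
  -- range of elements of D.erase 0
  have hrange : ∀ (D : Finset (ZMod m)), (∀ i ∈ D, i + 1 ∉ D) → 0 ∈ D →
      ∀ x ∈ D.erase 0, 2 ≤ x.val ∧ x.val ≤ m - 2 := by
    intro D hnc h0 x hx
    have hx1 := Finset.mem_of_mem_erase hx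
    have hx2 := Finset.ne_of_mem_erase hx
    have hxv0 : x.val ≠ 0 := fun h => hx2 ((ZMod.val_eq_zero x).mp h)
    have hxv1 : x.val ≠ 1 := by
      intro h
      have h1 : x = 0 + 1 := by
        apply hinj
        rw [zmod_succ_val 0 (by rw [ZMod.val_zero]; omega), ZMod.val_zero, h]
      exact hnc 0 h0 (h1 ▸ hx1)
    have hxvm : x.val ≠ m - 1 := by
      intro h
      have h1 : x + 1 = 0 := zmod_succ_top x (by omega)
      exact hnc x hx1 (h1 ▸ h0)
    have := hvlt x
    omega
  apply Finset.card_nbij' (fun D => (D.erase 0).image (fun x => x.val - 2))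
    (fun T => insert 0 (T.image (fun a => ((a + 2 : ℕ) : ZMod m))))
  · -- forward
    intro D hD
    simp only [Finset.mem_coe, Finset.mem_filter, Finset.mem_univ, true_and] at hD
    obtain ⟨⟨hcard, hnc⟩, h0⟩ := hD
    have hr := hrange D hnc h0
    simp only [Finset.mem_coe, Finset.mem_powersetCard, Finset.mem_filter]
    refine ⟨⟨?_, ?_⟩, ?_⟩
    · intro a ha
      simp only [Finset.mem_image] at ha
      obtain ⟨x, hx, rfl⟩ := ha
      have := hr x hx
      simp only [Finset.mem_range]; omega
    · rw [Finset.card_image_of_injOn, Finset.card_erase_of_mem h0, hcard]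
      omega
      intro x hx y hy hxy
      have hxy' : x.val - 2 = y.val - 2 := hxy
      have := hr x hx; have := hr y hy
      exact hinj (by omega)
    · intro a ha hcon
      simp only [Finset.mem_image] at ha hcon
      obtain ⟨x, hx, hxa⟩ := ha
      obtain ⟨y, hy, hya⟩ := hcon
      have h1 := hr x hx; have h2 := hr y hy
      have hyx : y.val = x.val + 1 := by omega
      have : y = x + 1 := hinj (by rw [zmod_succ_val x (by omega), hyx])
      exact hnc x (Finset.mem_of_mem_erase hx) (this ▸ Finset.mem_of_mem_erase hy)
  · -- backward
    intro T hT
    simp only [Finset.mem_coe, Finset.mem_powersetCard, Finset.mem_filter] at hT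
    obtain ⟨⟨hsub, hcard⟩, hnc⟩ := hT
    have hb : ∀ a ∈ T, a + 2 < m := by
      intro a ha
      have := Finset.mem_range.mp (hsub ha)
      omega
    have hval : ∀ a ∈ T, ((a + 2 : ℕ) : ZMod m).val = a + 2 :=
      fun a ha => ZMod.val_cast_of_lt (hb a ha)
    have h0img : (0 : ZMod m) ∉ T.image (fun a => ((a + 2 : ℕ) : ZMod m)) := by
      intro hcon
      simp only [Finset.mem_image] at hcon
      obtain ⟨a, ha, haa⟩ := hcon
      have := hval a ha
      rw [haa, ZMod.val_zero] at this
      omega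
    simp only [Finset.mem_coe, Finset.mem_filter, Finset.mem_univ, true_and]
    refine ⟨⟨?_, ?_⟩, Finset.mem_insert_self _ _⟩
    · rw [Finset.card_insert_of_notMem h0img, Finset.card_image_of_injOn, hcard]
      intro a ha b hb' hab
      have hab' : ((a + 2 : ℕ) : ZMod m) = ((b + 2 : ℕ) : ZMod m) := hab
      have : ((a + 2 : ℕ) : ZMod m).val = ((b + 2 : ℕ) : ZMod m).val := by rw [hab']
      rw [hval a ha, hval b hb'] at this
      omega
    · intro i hi hcon
      rcases Finset.mem_insert.mp hi with h | h
      · -- i = 0 : 0 + 1 = 1 not in the set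
        subst h
        have h1v : ((0 : ZMod m) + 1).val = 1 := by
          rw [zmod_succ_val 0 (by rw [ZMod.val_zero]; omega), ZMod.val_zero]
        rcases Finset.mem_insert.mp hcon with h2 | h2
        · rw [h2, ZMod.val_zero] at h1v; omega
        · simp only [Finset.mem_image] at h2
          obtain ⟨a, ha, haa⟩ := h2
          have := hval a ha
          rw [haa, h1v] at this
          omega
      · simp only [Finset.mem_image] at h
        obtain ⟨a, ha, rfl⟩ := h
        have hva := hval a ha
        have ham := hb a ha
        rcases Nat.lt_or_ge (a + 3) m with hlt | hge
        · have hsv : (((a + 2 : ℕ) : ZMod m) + 1).val = a + 3 := by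
            rw [zmod_succ_val _ (by omega)]; omega
          rcases Finset.mem_insert.mp hcon with h2 | h2
          · rw [h2, ZMod.val_zero] at hsv; omega
          · simp only [Finset.mem_image] at h2
            obtain ⟨b, hb', hba⟩ := h2
            have hvb := hval b hb'
            rw [hba] at hvb
            rw [hvb] at hsv
            have : b = a + 1 := by omega
            exact hnc a ha (this ▸ hb')
        · have ha3 : a + 3 = m := by omega
          have hz : ((a + 2 : ℕ) : ZMod m) + 1 = 0 := zmod_succ_top _ (by omega)
          rcases Finset.mem_insert.mp hcon with h2 | h2
          ·
            -- h2 : i + 1 = 0, fine: but 0 IS in the set, so this case must be ruled out: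
            -- i + 1 = 0 and 0 ∈ D is exactly the wrap-around adjacency; indeed it violates:
            -- but our set construction must avoid it: a + 2 = m - 1 means a = m - 3,
            -- but a ∈ range (m - 3) so a < m - 3. Contradiction.
            have := Finset.mem_range.mp (hsub ha)
            omega
          · simp only [Finset.mem_image] at h2
            obtain ⟨b, hb', hba⟩ := h2
            have hvb := hval b hb'
            rw [hba, hz, ZMod.val_zero] at hvb
            omega
  · -- left inverse
    intro D hD
    simp only [Finset.mem_coe, Finset.mem_filter, Finset.mem_univ, true_and] at hD
    obtain ⟨⟨hcard, hnc⟩, h0⟩ := hD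
    have hr := hrange D hnc h0
    beta_reduce
    rw [Finset.image_image]
    rw [show (D.erase 0).image ((fun a => ((a + 2 : ℕ) : ZMod m)) ∘ fun x => x.val - 2)
        = (D.erase 0).image id from ?_, Finset.image_id, Finset.insert_erase h0]
    apply Finset.image_congr
    intro x hx
    have := hr x hx
    simp only [Function.comp_apply, id_eq]
    rw [show x.val - 2 + 2 = x.val by omega]
    exact ZMod.natCast_rightInverse x
  · -- right inverse
    intro T hT
    simp only [Finset.mem_coe, Finset.mem_powersetCard, Finset.mem_filter] at hT
    obtain ⟨⟨hsub, hcard⟩, hnc⟩ := hT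
    have hb : ∀ a ∈ T, a + 2 < m := by
      intro a ha
      have := Finset.mem_range.mp (hsub ha)
      omega
    have h0img : (0 : ZMod m) ∉ T.image (fun a => ((a + 2 : ℕ) : ZMod m)) := by
      intro hcon
      simp only [Finset.mem_image] at hcon
      obtain ⟨a, ha, haa⟩ := hcon
      have := ZMod.val_cast_of_lt (hb a ha)
      rw [haa, ZMod.val_zero] at this
      omega
    beta_reduce
    rw [Finset.erase_insert h0img, Finset.image_image]
    rw [show T.image ((fun x : ZMod m => x.val - 2) ∘ fun a => ((a + 2 : ℕ) : ZMod m))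
        = T.image id from ?_, Finset.image_id]
    apply Finset.image_congr
    intro a ha
    simp only [Function.comp_apply, id_eq]
    rw [ZMod.val_cast_of_lt (hb a ha)]
    omega

lemma cycle_count (m : ℕ) [NeZero m] (hm : 4 ≤ m) (r : ℕ) :
    ((Finset.univ : Finset (Finset (ZMod m))).filter
        (fun D => D.card = r ∧ ∀ i ∈ D, i + 1 ∉ D)).card
      = lineCount (m - 1) r + (if r = 0 then 0 else lineCount (m - 3) (r - 1)) := by
  classical
  rw [← Finset.card_filter_add_card_filter_not
      (s := (Finset.univ : Finset (Finset (ZMod m))).filter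
        (fun D => D.card = r ∧ ∀ i ∈ D, i + 1 ∉ D))
      (p := fun D => (0 : ZMod m) ∉ D)]
  congr 1
  · rw [Finset.filter_filter]
    exact cycle_part_A m r hm
  · rw [Finset.filter_filter]
    rcases r with _ | s
    · rw [if_pos rfl, Finset.card_eq_zero, Finset.filter_eq_empty_iff]
      rintro D -
      rintro ⟨⟨hcard, -⟩, h0⟩
      apply h0
      rw [Finset.card_eq_zero.mp hcard]
      exact Finset.notMem_empty _
    · rw [if_neg (by omega)]
      simp only [Nat.add_sub_cancel]
      rw [← cycle_part_B m s hm]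
      congr 1
      apply Finset.filter_congr
      intro D _
      simp [not_not]

lemma cycle_arith (m r : ℕ) (hm : 4 ≤ m) (hr : 2 * r ≤ m) :
    (m - r) * (lineCount (m - 1) r + if r = 0 then 0 else lineCount (m - 3) (r - 1))
      = m * (m - r).choose r := by
  rcases r with _ | s
  · simp [lineCount_eq]
  · rw [if_neg (by omega), lineCount_eq, lineCount_eq]
    simp only [Nat.add_sub_cancel]
    rw [show m - 1 + 1 - (s + 1) = m - (s + 1) by omega,
        show m - 3 + 1 - s = m - (s + 1) - 1 by omega]
    have h1 : (m - (s + 1)) * Nat.choose (m - (s + 1) - 1) s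
        = Nat.choose (m - (s + 1)) (s + 1) * (s + 1) := by
      have h2 := Nat.add_one_mul_choose_eq (m - (s + 1) - 1) s
      rw [show m - (s + 1) - 1 + 1 = m - (s + 1) by omega] at h2
      exact h2
    rw [Nat.mul_add, h1, mul_comm (Nat.choose (m - (s + 1)) (s + 1)) (s + 1)]
    rw [← Nat.add_mul, show m - (s + 1) + (s + 1) = m by omega]

theorem domino_pairs_count (n r : ℕ) (hn : 2 ≤ n) (hrn : r ≤ n) :
    (2 * n - r) *
      Nat.card {p : Finset (ZMod (2 * n)) × (ZMod n ≃ {s : ZMod (2 * n) // Odd s.val}) //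
        p.1.card = r ∧ (∀ i ∈ p.1, i + 1 ∉ p.1) ∧ DominoForced n p.1 p.2} =
      2 * n * Nat.choose (2 * n - r) r * Nat.factorial (n - r) := by
  classical
  haveI : NeZero n := ⟨by omega⟩
  rw [Nat.card_congr (Equiv.subtypeProdEquivSigmaSubtype
      (fun (D : Finset (ZMod (2 * n))) (σ : ZMod n ≃ {s : ZMod (2 * n) // Odd s.val}) =>
        D.card = r ∧ (∀ i ∈ D, i + 1 ∉ D) ∧ DominoForced n D σ))]
  rw [Nat.card_eq_fintype_card, Fintype.card_sigma]
  have hsum : ∀ D : Finset (ZMod (2 * n)),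
      Fintype.card {σ : ZMod n ≃ {s : ZMod (2 * n) // Odd s.val} //
          D.card = r ∧ (∀ i ∈ D, i + 1 ∉ D) ∧ DominoForced n D σ}
        = if D.card = r ∧ ∀ i ∈ D, i + 1 ∉ D then (n - r).factorial else 0 := by
    intro D
    by_cases hD : D.card = r ∧ ∀ i ∈ D, i + 1 ∉ D
    · rw [if_pos hD, ← Nat.card_eq_fintype_card,
        Nat.card_congr (Equiv.subtypeEquivRight (fun σ =>
          ⟨fun h => h.2.2, fun h => ⟨hD.1, hD.2, h⟩⟩))]
      exact fiber_count r D hD.1 hD.2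
    · rw [if_neg hD]
      exact Fintype.card_eq_zero_iff.mpr ⟨fun σ => hD ⟨σ.2.1, σ.2.2.1⟩⟩
  rw [Finset.sum_congr rfl (fun D _ => hsum D), ← Finset.sum_filter, Finset.sum_const,
    smul_eq_mul]
  rw [cycle_count (2 * n) (by omega) r, ← mul_assoc,
    cycle_arith (2 * n) r (by omega) (by omega)]
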